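/- Let Γ, Γ' be n×n adjacency matrices over GF(2) and let A, B, C, D be n×n diagonal matrices over GF(2) with AD + BC = I. If Γ' C Γ + A Γ + Γ' D + B = 0, then CΓ + D is invertible and (AΓ + B)(CΓ + D)^{-1} = Γ'. -/

import Mathlib

open Matrix

theorem lft_of_bilinear {n : ℕ} (Γ Γ' : Matrix (Fin n) (Fin n) (ZMod 2))
    (a b c d : Fin n → ZMod 2)
    (hsym : Γᵀ = Γ) (hdiag : ∀ i, Γ i i = 0)
    (hsym' : Γ'ᵀ = Γ') (hdiag' : ∀ i, Γ' i i = 0)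
    (hQ : diagonal a * diagonal d + diagonal b * diagonal c = 1)
    (hrel : Γ' * diagonal c * Γ + diagonal a * Γ + Γ' * diagonal d + diagonal b = 0) :
    IsUnit (diagonal c * Γ + diagonal d) ∧
      (diagonal a * Γ + diagonal b) * (diagonal c * Γ + diagonal d)⁻¹ = Γ' := by
  have hself : ∀ X : Matrix (Fin n) (Fin n) (ZMod 2), X + X = 0 := by
    intro X
    ext i j
    have : ∀ x : ZMod 2, x + x = 0 := by decide
    simp [this]
  have cancel : ∀ X Y : Matrix (Fin n) (Fin n) (ZMod 2), X + Y = 0 → X = Y := by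
    intro X Y h
    calc X = X + (Y + Y) := by rw [hself Y, add_zero]
      _ = (X + Y) + Y := by abel
      _ = Y := by rw [h, zero_add]
  have comm : ∀ x y : Fin n → ZMod 2,
      diagonal x * diagonal y = diagonal y * diagonal x := by
    intro x y
    rw [diagonal_mul_diagonal, diagonal_mul_diagonal]
    exact congrArg diagonal (funext fun i => mul_comm (x i) (y i))
  have h1 : Γ' * diagonal c * Γ + Γ' * diagonal d = diagonal a * Γ + diagonal b := by
    apply cancel
    rw [← hrel]; abel
  have h1' : Γ' * (diagonal c * Γ + diagonal d) = diagonal a * Γ + diagonal b := by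
    rw [mul_add, ← mul_assoc]; exact h1
  have h2 : (diagonal c * Γ' + diagonal a) * (diagonal c * Γ + diagonal d) = 1 := by
    have e1 : diagonal c * (Γ' * diagonal c * Γ + Γ' * diagonal d)
        = diagonal c * (diagonal a * Γ + diagonal b) := by rw [h1]
    calc (diagonal c * Γ' + diagonal a) * (diagonal c * Γ + diagonal d)
        = diagonal c * (Γ' * diagonal c * Γ + Γ' * diagonal d)
          + (diagonal a * (diagonal c * Γ) + diagonal a * diagonal d) := by noncomm_ring
      _ = diagonal c * (diagonal a * Γ + diagonal b)
          + (diagonal a * (diagonal c * Γ) + diagonal a * diagonal d) := by rw [e1]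
      _ = (diagonal c * diagonal a * Γ + diagonal a * diagonal c * Γ)
          + (diagonal c * diagonal b + diagonal a * diagonal d) := by noncomm_ring
      _ = 1 := by
          rw [comm c a, comm c b, hself (diagonal a * diagonal c * Γ), zero_add, add_comm,
            ← hQ]
  have hu : IsUnit (diagonal c * Γ + diagonal d) := (Matrix.isUnit_iff_isUnit_det _).mpr (Matrix.isUnit_det_of_left_inverse h2)
  refine ⟨hu, ?_⟩
  have hdet : IsUnit (diagonal c * Γ + diagonal d).det :=
    (Matrix.isUnit_iff_isUnit_det _).mp hu
  rw [← h1', mul_assoc, Matrix.mul_nonsing_inv _ hdet, mul_one]
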